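/- Under the hypotheses of the implicit-function lemma above, the map h : B_{H⁰}(θ, r₀) → X^± satisfying (I − P⁰)A(z + h(z)) = θ and h(θ) = θ is strictly Fréchet differentiable at θ ∈ H⁰ with h'(θ) = 0: for any ε > 0 there is δ₀ > 0 with ‖h(z₂) − h(z₁)‖_{X} ≤ 3C₁C₂ε ‖z₂ − z₁‖_X for all z₁, z₂ ∈ B_{H⁰}(θ, δ₀). -/

import Mathlib

/-- Strict Fréchet differentiability of the implicit map `h` at the origin with
`h'(θ) = 0` (Lemma 3.1, second part): under the hypotheses of the implicit-function
lemma, with `C₁` a bound for the inverse of `B(θ)|_{X^±}` and `C₂` a bound for the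
projection `(I − P⁰)|_X : X → X^±`, for every `ε > 0` there is `δ₀ > 0` such that
`‖h(z₂) − h(z₁)‖_X ≤ 3C₁C₂ε‖z₂ − z₁‖` for all `z₁, z₂ ∈ B_{H⁰}(θ, δ₀)`. -/
theorem statement11 {H X : Type*} [NormedAddCommGroup H] [InnerProductSpace ℝ H]
    [CompleteSpace H] [NormedAddCommGroup X] [NormedSpace ℝ X] [CompleteSpace X]
    (i : X →L[ℝ] H) (hinj : Function.Injective i) (hdense : DenseRange i)
    (hile : ∀ x : X, ‖i x‖ ≤ ‖x‖)
    (H0 : Submodule ℝ H) (hfin : FiniteDimensional ℝ H0)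
    (j : H0 →ₗ[ℝ] X) (hj : ∀ z : H0, i (j z) = (z : H))
    (B0 : H →L[ℝ] H) (hB0sa : IsSelfAdjoint B0)
    (hker : LinearMap.ker (B0 : H →ₗ[ℝ] H) = H0)
    (B0X : X →L[ℝ] X) (hB0X : ∀ x : X, i (B0X x) = B0 (i x))
    (e : (Submodule.comap (i.toLinearMap) H0ᗮ) ≃L[ℝ]
         (Submodule.comap (i.toLinearMap) H0ᗮ))
    (he : ∀ u : Submodule.comap (i.toLinearMap) H0ᗮ, (e u : X) = B0X (u : X))
    (A : X → X) (hA0 : A 0 = 0)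
    (K : ℝ → ℝ)
    (hK : Filter.Tendsto K (nhdsWithin 0 (Set.Ioi (0 : ℝ))) (nhds 0))
    (hstrict : ∀ r > (0 : ℝ), ∀ x₁ x₂ : X, ‖x₁‖ < r → ‖x₂‖ < r →
      ‖A x₁ - B0X x₁ - A x₂ + B0X x₂‖ ≤ K r * ‖x₁ - x₂‖)
    -- the constants C₁ = ‖(B(θ)|_{X^±})⁻¹‖ and C₂ = ‖(I−P⁰)‖_{L(X,X^±)}
    (C₁ C₂ : ℝ) (hC₁0 : 0 ≤ C₁) (hC₂0 : 0 ≤ C₂)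
    (hC₁ : ∀ u : Submodule.comap (i.toLinearMap) H0ᗮ,
      ‖(e.symm u : X)‖ ≤ C₁ * ‖(u : X)‖)
    (P0 : H →L[ℝ] H) (hP0id : ∀ w ∈ H0, P0 w = w) (hP0ker : ∀ w ∈ H0ᗮ, P0 w = 0)
    (Ppm : X →L[ℝ] X) (hPpm : ∀ x : X, i (Ppm x) = i x - P0 (i x))
    (hC₂ : ∀ x : X, ‖Ppm x‖ ≤ C₂ * ‖x‖)
    -- the implicit map `h` furnished by the first part of the lemma
    (r₀ : ℝ) (hr₀ : 0 < r₀) (h : H0 → X)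
    (hh0 : h 0 = 0)
    (hhperp : ∀ z : H0, ‖(z : H)‖ < r₀ → i (h z) ∈ H0ᗮ)
    (hhball : ∀ z : H0, ‖(z : H)‖ < r₀ → ‖h z‖ ≤ r₀)
    (hheq : ∀ z : H0, ‖(z : H)‖ < r₀ → i (A (j z + h z)) ∈ H0)
    (hhlip : ∀ z₁ z₂ : H0, ‖(z₁ : H)‖ < r₀ → ‖(z₂ : H)‖ < r₀ →
      ‖h z₁ - h z₂‖ ≤ 2 * ‖(z₁ : H) - (z₂ : H)‖) :
    ∀ ε > (0 : ℝ), ∃ δ₀ > (0 : ℝ), δ₀ ≤ r₀ ∧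
      ∀ z₁ z₂ : H0, ‖(z₁ : H)‖ < δ₀ → ‖(z₂ : H)‖ < δ₀ →
        ‖h z₂ - h z₁‖ ≤ 3 * C₁ * C₂ * ε * ‖(z₂ : H) - (z₁ : H)‖ := by
  intro ε hε
  obtain ⟨M, hM0, hM⟩ : ∃ M : ℝ, 0 ≤ M ∧ ∀ z : H0, ‖j z‖ ≤ M * ‖(z : H)‖ := by
    refine ⟨‖LinearMap.toContinuousLinearMap j‖, ContinuousLinearMap.opNorm_nonneg _, fun z => ?_⟩
    have h1 := (LinearMap.toContinuousLinearMap j).le_opNorm z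
    simpa using h1
  have hM2 : (0:ℝ) < M + 2 := by linarith
  set ε' : ℝ := 3 * ε / (M + 2) with hε'def
  have hε' : 0 < ε' := by positivity
  obtain ⟨δ, hδ0, hδ⟩ := Metric.tendsto_nhdsWithin_nhds.mp hK ε' hε'
  set r : ℝ := δ / 2 with hrdef
  have hr0 : 0 < r := by positivity
  have hKr : K r ≤ ε' := by
    have : dist (K r) 0 < ε' := by
      apply hδ
      · exact Set.mem_Ioi.mpr hr0
      · rw [Real.dist_eq, sub_zero, abs_of_pos hr0, hrdef]; linarith
    rw [Real.dist_eq, sub_zero] at this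
    exact le_of_lt (lt_of_abs_lt this)
  refine ⟨min r₀ (r / (M + 2)), ?_, min_le_left _ _, ?_⟩
  · exact lt_min hr₀ (by positivity)
  intro z₁ z₂ hz₁ hz₂
  have hz₁r₀ : ‖(z₁ : H)‖ < r₀ := lt_of_lt_of_le hz₁ (min_le_left _ _)
  have hz₂r₀ : ‖(z₂ : H)‖ < r₀ := lt_of_lt_of_le hz₂ (min_le_left _ _)
  have h0r₀ : ‖((0 : H0) : H)‖ < r₀ := by simpa using hr₀
  have hhz₁ : ‖h z₁‖ ≤ 2 * ‖(z₁ : H)‖ := by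
    have := hhlip z₁ 0 hz₁r₀ h0r₀
    simpa [hh0] using this
  have hhz₂ : ‖h z₂‖ ≤ 2 * ‖(z₂ : H)‖ := by
    have := hhlip z₂ 0 hz₂r₀ h0r₀
    simpa [hh0] using this
  set x₁ : X := j z₁ + h z₁ with hx₁def
  set x₂ : X := j z₂ + h z₂ with hx₂def
  have hxbound : ∀ (z : H0), ‖(z : H)‖ < min r₀ (r / (M+2)) → ‖h z‖ ≤ 2 * ‖(z : H)‖ →
      ‖j z + h z‖ < r := by
    intro z hz hhz
    have h1 : ‖j z + h z‖ ≤ (M + 2) * ‖(z : H)‖ := by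
      calc ‖j z + h z‖ ≤ ‖j z‖ + ‖h z‖ := norm_add_le _ _
        _ ≤ M * ‖(z : H)‖ + 2 * ‖(z : H)‖ := add_le_add (hM z) hhz
        _ = (M + 2) * ‖(z : H)‖ := by ring
    have h2 : ‖(z : H)‖ < r / (M + 2) := lt_of_lt_of_le hz (min_le_right _ _)
    calc ‖j z + h z‖ ≤ (M + 2) * ‖(z : H)‖ := h1
      _ < (M + 2) * (r / (M + 2)) := mul_lt_mul_of_pos_left h2 hM2
      _ = r := by field_simp
  have hx₁r : ‖x₁‖ < r := hxbound z₁ hz₁ hhz₁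
  have hx₂r : ‖x₂‖ < r := hxbound z₂ hz₂ hhz₂
  -- B0 maps everything into H0ᗮ
  have hB0range : ∀ w : H, B0 w ∈ H0ᗮ := by
    intro w
    rw [Submodule.mem_orthogonal]
    intro v hv
    have hsymm := hB0sa.isSymmetric w v
    simp only [ContinuousLinearMap.coe_coe] at hsymm
    have hvker : B0 v = 0 := by
      have : v ∈ LinearMap.ker (B0 : H →ₗ[ℝ] H) := by rw [hker]; exact hv
      simpa using this
    rw [real_inner_comm, hsymm, hvker, inner_zero_right]
  -- kernel facts
  have hB0z : ∀ z : H0, B0 (z : H) = 0 := by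
    intro z
    have : (z : H) ∈ LinearMap.ker (B0 : H →ₗ[ℝ] H) := by rw [hker]; exact z.2
    simpa using this
  -- the key identity
  set D : X := A x₁ - B0X x₁ - A x₂ + B0X x₂ with hDdef
  have hkey : Ppm D = B0X (h z₂) - B0X (h z₁) := by
    apply hinj
    rw [hPpm]
    have hiD : i D = i (A x₁) - B0 (i x₁) - i (A x₂) + B0 (i x₂) := by
      simp [hDdef, map_sub, map_add, hB0X]
    have hP0D : P0 (i D) = i (A x₁) - i (A x₂) := by
      rw [hiD, map_add, map_sub, map_sub]
      rw [hP0id _ (hheq z₁ hz₁r₀), hP0id _ (hheq z₂ hz₂r₀),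
        hP0ker _ (hB0range (i x₁)), hP0ker _ (hB0range (i x₂))]
      abel
    rw [hP0D, hiD]
    have hx₁i : B0 (i x₁) = B0 (i (h z₁)) := by
      rw [hx₁def, map_add, map_add, hj, hB0z, zero_add]
    have hx₂i : B0 (i x₂) = B0 (i (h z₂)) := by
      rw [hx₂def, map_add, map_add, hj, hB0z, zero_add]
    rw [hx₁i, hx₂i, map_sub, hB0X, hB0X]
    abel
  -- pass to the subspace X±
  have hnorm1 : ‖h z₂ - h z₁‖ ≤ C₁ * ‖Ppm D‖ := by
    have h1 := hC₁ (e ((⟨h z₂, hhperp z₂ hz₂r₀⟩ :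
      Submodule.comap (i.toLinearMap) H0ᗮ) - ⟨h z₁, hhperp z₁ hz₁r₀⟩))
    rw [e.symm_apply_apply, he] at h1
    rw [hkey]
    simpa [map_sub] using h1
  have hnorm2 : ‖Ppm D‖ ≤ C₂ * ‖D‖ := hC₂ D
  have hnorm3 : ‖D‖ ≤ K r * ‖x₁ - x₂‖ := hstrict r hr0 x₁ x₂ hx₁r hx₂r
  have hnorm4 : ‖x₁ - x₂‖ ≤ (M + 2) * ‖(z₂ : H) - (z₁ : H)‖ := by
    have hsplit : x₁ - x₂ = (j z₁ - j z₂) + (h z₁ - h z₂) := by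
      rw [hx₁def, hx₂def]; abel
    rw [hsplit]
    have hjz : ‖j z₁ - j z₂‖ ≤ M * ‖(z₂ : H) - (z₁ : H)‖ := by
      rw [← map_sub]
      calc ‖j (z₁ - z₂)‖ ≤ M * ‖((z₁ - z₂ : H0) : H)‖ := hM _
        _ = M * ‖(z₂ : H) - (z₁ : H)‖ := by
            rw [Submodule.coe_sub, norm_sub_rev]
    have hhz : ‖h z₁ - h z₂‖ ≤ 2 * ‖(z₂ : H) - (z₁ : H)‖ := by
      calc ‖h z₁ - h z₂‖ ≤ 2 * ‖(z₁ : H) - (z₂ : H)‖ := hhlip z₁ z₂ hz₁r₀ hz₂r₀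
        _ = 2 * ‖(z₂ : H) - (z₁ : H)‖ := by rw [norm_sub_rev]
    calc ‖(j z₁ - j z₂) + (h z₁ - h z₂)‖ ≤ ‖j z₁ - j z₂‖ + ‖h z₁ - h z₂‖ :=
        norm_add_le _ _
      _ ≤ M * ‖(z₂ : H) - (z₁ : H)‖ + 2 * ‖(z₂ : H) - (z₁ : H)‖ := add_le_add hjz hhz
      _ = (M + 2) * ‖(z₂ : H) - (z₁ : H)‖ := by ring
  have hnorm5 : ‖D‖ ≤ ε' * ((M + 2) * ‖(z₂ : H) - (z₁ : H)‖) := by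
    calc ‖D‖ ≤ K r * ‖x₁ - x₂‖ := hnorm3
      _ ≤ ε' * ‖x₁ - x₂‖ := mul_le_mul_of_nonneg_right hKr (norm_nonneg _)
      _ ≤ ε' * ((M + 2) * ‖(z₂ : H) - (z₁ : H)‖) :=
          mul_le_mul_of_nonneg_left hnorm4 (le_of_lt hε')
  calc ‖h z₂ - h z₁‖ ≤ C₁ * ‖Ppm D‖ := hnorm1
    _ ≤ C₁ * (C₂ * ‖D‖) := mul_le_mul_of_nonneg_left hnorm2 hC₁0
    _ ≤ C₁ * (C₂ * (ε' * ((M + 2) * ‖(z₂ : H) - (z₁ : H)‖))) :=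
        mul_le_mul_of_nonneg_left (mul_le_mul_of_nonneg_left hnorm5 hC₂0) hC₁0
    _ = 3 * C₁ * C₂ * ε * ‖(z₂ : H) - (z₁ : H)‖ := by
        rw [hε'def]; field_simp
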